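/- Key switching preserves the encrypted message up to small noise: let q ≥ 2, n₁, n₂ ≥ 1, l = ⌈log₂ q⌉ and N₁ = (n₁+1)·l. Let s₁ ∈ ℤ^{n₁+1}, t₂ ∈ ℤ^{n₂} and s₂ = (1, t₂) ∈ ℤ^{n₂+1}. Let A ∈ ℤ^{N₁×n₂}, e ∈ ℤ^{N₁}, and let b ∈ ℤ^{N₁} satisfy b ≡ A·t₂ + e + PowersOfTwo_q(s₁) (mod q) entrywise; set P = [b | −A] ∈ ℤ^{N₁×(n₂+1)}. Then for every c ∈ ℤ^{n₁+1}, the switched ciphertext c₂ = BitDecomp_q(c)ᵀ · P satisfies c₂ · s₂ ≡ c · s₁ + BitDecomp_q(c) · e (mod q). -/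

import Mathlib

/-- Bit decomposition of an integer vector `x` modulo `q`: the entry at index
`(i, j)` is the `i`-th binary digit of `x j mod q` (taken in `[0, q)`).
Here `Nat.clog 2 q = ⌈log₂ q⌉`. -/
def bitDecomp (q n : ℕ) (x : Fin n → ℤ) : Fin (Nat.clog 2 q) × Fin n → ℤ :=
  fun k => (x k.2 % (q : ℤ)) / 2 ^ (k.1 : ℕ) % 2

/-- Powers-of-two expansion of an integer vector `y` modulo `q`: the entry at
index `(i, j)` is `2^i · y j`, reduced modulo `q` (taken in `[0, q)`). -/
def powersOfTwo (q n : ℕ) (y : Fin n → ℤ) : Fin (Nat.clog 2 q) × Fin n → ℤ :=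
  fun k => (2 ^ (k.1 : ℕ) * y k.2) % (q : ℤ)


lemma nat_recon (L n : ℕ) : ∑ i ∈ Finset.range L, (n / 2 ^ i % 2) * 2 ^ i = n % 2 ^ L := by
  induction L with
  | zero => simp [Nat.mod_one]
  | succ L ih =>
    rw [Finset.sum_range_succ, ih, pow_succ, Nat.mod_mul]
    ring

lemma int_recon (L : ℕ) (m : ℤ) (h0 : 0 ≤ m) (h1 : m < 2 ^ L) :
    ∑ i ∈ Finset.range L, (m / 2 ^ i % 2) * 2 ^ i = m := by
  lift m to ℕ using h0
  have h1' : (m : ℕ) < 2 ^ L := by exact_mod_cast h1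
  have := nat_recon L m
  calc ∑ i ∈ Finset.range L, ((m:ℤ) / 2 ^ i % 2) * 2 ^ i
      = ((∑ i ∈ Finset.range L, (m / 2 ^ i % 2) * 2 ^ i : ℕ) : ℤ) := by push_cast; rfl
    _ = ((m % 2 ^ L : ℕ) : ℤ) := by rw [this]
    _ = (m : ℤ) := by rw [Nat.mod_eq_of_lt h1']

lemma modEq_sum {α : Type*} (s : Finset α) (f g : α → ℤ) (n : ℤ)
    (h : ∀ k ∈ s, f k ≡ g k [ZMOD n]) : (∑ k ∈ s, f k) ≡ ∑ k ∈ s, g k [ZMOD n] := by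
  classical
  induction s using Finset.induction with
  | empty => simp [Int.ModEq.refl]
  | insert x s hx ih =>
    rw [Finset.sum_insert hx, Finset.sum_insert hx]
    exact (h _ (Finset.mem_insert_self _ _)).add
      (ih fun k hk => h k (Finset.mem_insert_of_mem hk))

/-- Key switching preserves the encrypted message up to the small error
`BitDecomp_q(c) · e`.  The rows of the matrices `A`, `P` and the entries of
`b`, `e` are indexed by `Fin (⌈log₂ q⌉) × Fin (n₁+1)`, which has cardinality
`N₁ = (n₁+1)·⌈log₂ q⌉`; the row `P k` is `[b k ∣ -A k]`, and `s₂ = (1, t₂)`. -/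
theorem key_switching_correct (q : ℕ) (hq : 2 ≤ q) (n₁ n₂ : ℕ) (hn₁ : 1 ≤ n₁) (hn₂ : 1 ≤ n₂)
    (s₁ : Fin (n₁ + 1) → ℤ) (t₂ : Fin n₂ → ℤ)
    (A : Fin (Nat.clog 2 q) × Fin (n₁ + 1) → Fin n₂ → ℤ)
    (e b : Fin (Nat.clog 2 q) × Fin (n₁ + 1) → ℤ)
    (hb : ∀ k, b k ≡ (∑ j, A k j * t₂ j) + e k + powersOfTwo q (n₁ + 1) s₁ k [ZMOD (q : ℤ)])
    (c : Fin (n₁ + 1) → ℤ)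
    (c₂ : Fin (n₂ + 1) → ℤ)
    (hc₂ : ∀ j, c₂ j = ∑ k, bitDecomp q (n₁ + 1) c k *
      (Fin.cons (b k) (fun j' => -A k j') : Fin (n₂ + 1) → ℤ) j) :
    (∑ j, c₂ j * (Fin.cons 1 t₂ : Fin (n₂ + 1) → ℤ) j)
      ≡ (∑ i, c i * s₁ i) + ∑ k, bitDecomp q (n₁ + 1) c k * e k [ZMOD (q : ℤ)] := by

  classical
  set d := bitDecomp q (n₁ + 1) c with hd
  have hq0 : (q : ℤ) ≠ 0 := by positivity
  have hqpos : (0 : ℤ) < q := by positivity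
  have hLHS : (∑ j, c₂ j * (Fin.cons 1 t₂ : Fin (n₂ + 1) → ℤ) j)
      = ∑ k, d k * (b k - ∑ j, A k j * t₂ j) := by
    simp only [hc₂, Finset.sum_mul]
    rw [Finset.sum_comm]
    refine Finset.sum_congr rfl fun k _ => ?_
    rw [Fin.sum_univ_succ, mul_sub, Finset.mul_sum]
    simp only [Fin.cons_zero, Fin.cons_succ, mul_one]
    rw [sub_eq_add_neg, ← Finset.sum_neg_distrib]
    congr 1
    exact Finset.sum_congr rfl fun j _ => by ring
  have hpot : (∑ k, d k * powersOfTwo q (n₁ + 1) s₁ k) ≡ ∑ i, c i * s₁ i [ZMOD (q : ℤ)] := by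
    have h1 : (∑ k, d k * powersOfTwo q (n₁ + 1) s₁ k)
        ≡ ∑ k : Fin (Nat.clog 2 q) × Fin (n₁ + 1), d k * (2 ^ (k.1 : ℕ) * s₁ k.2)
          [ZMOD (q : ℤ)] :=
      modEq_sum _ _ _ _ fun k _ =>
        Int.ModEq.mul_left _ (Int.emod_emod_of_dvd _ dvd_rfl)
    have h2 : (∑ k : Fin (Nat.clog 2 q) × Fin (n₁ + 1), d k * (2 ^ (k.1 : ℕ) * s₁ k.2))
        = ∑ j, (c j % (q : ℤ)) * s₁ j := by
      rw [Fintype.sum_prod_type_right]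
      refine Finset.sum_congr rfl fun j _ => ?_
      have hrec : (∑ i : Fin (Nat.clog 2 q), d (i, j) * 2 ^ (i : ℕ)) = c j % (q : ℤ) := by
        simp only [hd, bitDecomp]
        rw [Fin.sum_univ_eq_sum_range (fun i => (c j % (q : ℤ)) / 2 ^ i % 2 * 2 ^ i)]
        exact int_recon _ _ (Int.emod_nonneg _ hq0)
          (lt_of_lt_of_le (Int.emod_lt_of_pos _ hqpos) (by
            exact_mod_cast Nat.cast_le.mpr (Nat.le_pow_clog one_lt_two q)))
      calc (∑ i : Fin (Nat.clog 2 q), d (i, j) * (2 ^ (i : ℕ) * s₁ j))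
          = (∑ i : Fin (Nat.clog 2 q), d (i, j) * 2 ^ (i : ℕ)) * s₁ j := by
            rw [Finset.sum_mul]; exact Finset.sum_congr rfl fun i _ => by ring
        _ = (c j % (q : ℤ)) * s₁ j := by rw [hrec]
    have h3 : (∑ j, (c j % (q : ℤ)) * s₁ j) ≡ ∑ j, c j * s₁ j [ZMOD (q : ℤ)] :=
      modEq_sum _ _ _ _ fun j _ =>
        Int.ModEq.mul_right _ (Int.emod_emod_of_dvd _ dvd_rfl)
    exact h1.trans (h2 ▸ h3)
  rw [hLHS]
  calc (∑ k, d k * (b k - ∑ j, A k j * t₂ j))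
      ≡ ∑ k, d k * (((∑ j, A k j * t₂ j) + e k + powersOfTwo q (n₁ + 1) s₁ k)
          - ∑ j, A k j * t₂ j) [ZMOD (q : ℤ)] :=
        modEq_sum _ _ _ _ fun k _ =>
          Int.ModEq.mul_left _ ((hb k).sub (Int.ModEq.refl _))
    _ = ∑ k, (d k * powersOfTwo q (n₁ + 1) s₁ k + d k * e k) :=
        Finset.sum_congr rfl fun k _ => by ring
    _ = (∑ k, d k * powersOfTwo q (n₁ + 1) s₁ k) + ∑ k, d k * e k :=
        Finset.sum_add_distrib
    _ ≡ (∑ i, c i * s₁ i) + ∑ k, d k * e k [ZMOD (q : ℤ)] := hpot.add_right _
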